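/- Let u, v, w, α, β, γ, δ, ε, ζ, η, θ, ι be elements of a commutative ring satisfying αβ - δ(δ+uη) = vwη², βγ - ζ(ζ+uι) = vwι², and αγ - ε(ε+uθ) = vwθ². Then the determinant of the 6×6 matrix with rows (wη, 0, 0, δ, -α, 0), (-δ-uη, α, 0, vη, 0, 0), (0, wι, 0, 0, ζ, -β), (0, -ζ-uι, β, 0, vι, 0), (-γ, 0, ε, 0, 0, vθ), (0, 0, wθ, γ, 0, -ε-uθ) equals αβγ times [2αβγ - δ(ε+uθ)ζ - (δ+uη)ε(ζ+uι) - vw((2δ+uη)θι - (2ε+uθ)ηι + (2ζ+uι)ηθ)]. -/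

import Mathlib

set_option maxHeartbeats 4000000
set_option maxRecDepth 8000

/-- the 6×6 determinant identity underlying Theorem 4 (g = 3):
under the three quadratic relations, the determinant of the coefficient
matrix of the linear system equals `αβγ` times the cubic expression. -/
theorem det_linear_system_dim3 {R : Type*} [CommRing R]
    (u v w α β γ δ ε ζ η θ ι : R)
    (h1 : α * β - δ * (δ + u * η) = v * w * η ^ 2)
    (h2 : β * γ - ζ * (ζ + u * ι) = v * w * ι ^ 2)
    (h3 : α * γ - ε * (ε + u * θ) = v * w * θ ^ 2) :
    Matrix.det !![w * η, 0, 0, δ, -α, 0;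
                  -δ - u * η, α, 0, v * η, 0, 0;
                  0, w * ι, 0, 0, ζ, -β;
                  0, -ζ - u * ι, β, 0, v * ι, 0;
                  -γ, 0, ε, 0, 0, v * θ;
                  0, 0, w * θ, γ, 0, -ε - u * θ] =
      α * β * γ *
        (2 * α * β * γ - δ * (ε + u * θ) * ζ - (δ + u * η) * ε * (ζ + u * ι) -
          v * w * ((2 * δ + u * η) * θ * ι - (2 * ε + u * θ) * η * ι +
            (2 * ζ + u * ι) * η * θ)) := by
  simp [Matrix.det_succ_row_zero, Fin.sum_univ_succ, Fin.succAbove]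
  linear_combination (-(α * β * γ * γ)) * h1 +
    (-(α * γ * δ * δ) - v * w * α * γ * η * η - u * α * γ * δ * η) * h2 +
    (-(δ * δ * ζ * ζ) - v * w * ζ * ζ * η * η - v * w * δ * δ * ι * ι
      - v * v * w * w * η * η * ι * ι - u * δ * ζ * ζ * η - u * δ * δ * ζ * ι
      - u * v * w * ζ * η * η * ι - u * v * w * δ * η * ι * ι
      - u * u * δ * ζ * η * ι) * h3
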